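/- arXiv:2508.05089 — 2 statements merged into one kernel-verified Lean document; each statement's English description precedes it below -/
import Mathlib

section
/- Let L : ℝ^M → ℝ be continuously differentiable, let g₁, …, g_N : ℝ^M × ℝ^d → ℝ^M be continuously differentiable, let ρ₁, …, ρ_N : [0,1] → ℝ^d be continuously differentiable, and let θ : [0,1] → ℝ^M be continuously differentiable with Σ_{i=1}^N g_i(θ(t), ρ_i(t)) = 0 for all t ∈ [0,1]. Suppose the Hessian H(t) := Σ_{i=1}^N D_θ g_i(θ(t), ρ_i(t)) ∈ ℝ^{M×M} is invertible for all t ∈ [0,1]. Then L(θ(1)) − L(θ(0)) = −Σ_{i=1}^N ∫₀¹ ∇L(θ(t))ᵀ H(t)⁻¹ D_y g_i(θ(t), ρ_i(t)) ρ_i′(t) dt; in particular the change in test loss equals the sum of the Integrated Influences I(i) := −∫₀¹ G(t) H(t)⁻¹ J_i(t) ρ_i′(t) dt with G(t) := ∇L(θ(t))ᵀ and J_i(t) := D_y g_i(θ(t), ρ_i(t)). -/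
open Set ContinuousLinearMap

lemma partial_fst' {E F G : Type*} [NormedAddCommGroup E] [NormedSpace ℝ E]
    [NormedAddCommGroup F] [NormedSpace ℝ F] [NormedAddCommGroup G] [NormedSpace ℝ G]
    {g : E × F → G} (hg : ContDiff ℝ 1 g) (x : E) (y : F) :
    fderiv ℝ (fun x' => g (x', y)) x
      = (fderiv ℝ g (x, y)).comp (ContinuousLinearMap.inl ℝ E F) :=
  ((hg.differentiable one_ne_zero (x, y)).hasFDerivAt.comp x
    (hasFDerivAt_prodMk_left x y)).fderiv

lemma partial_snd' {E F G : Type*} [NormedAddCommGroup E] [NormedSpace ℝ E]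
    [NormedAddCommGroup F] [NormedSpace ℝ F] [NormedAddCommGroup G] [NormedSpace ℝ G]
    {g : E × F → G} (hg : ContDiff ℝ 1 g) (x : E) (y : F) :
    fderiv ℝ (fun y' => g (x, y')) y
      = (fderiv ℝ g (x, y)).comp (ContinuousLinearMap.inr ℝ E F) :=
  ((hg.differentiable one_ne_zero (x, y)).hasFDerivAt.comp y
    (hasFDerivAt_prodMk_right x y)).fderiv

lemma clm_apply_split {E F G : Type*} [NormedAddCommGroup E] [NormedSpace ℝ E]
    [NormedAddCommGroup F] [NormedSpace ℝ F] [NormedAddCommGroup G] [NormedSpace ℝ G]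
    (f' : E × F →L[ℝ] G) (u : E) (v : F) :
    f' (u, v) = f'.comp (ContinuousLinearMap.inl ℝ E F) u
      + f'.comp (ContinuousLinearMap.inr ℝ E F) v := by
  have : (u, v) = ((u, 0) : E × F) + (0, v) := by simp
  rw [this, map_add]; rfl

lemma inv_cont {E : Type*} [NormedAddCommGroup E] [NormedSpace ℝ E] [CompleteSpace E]
    {H : ℝ → E →L[ℝ] E} {s : Set ℝ} (hHc : ContinuousOn H s)
    (hinv : ∀ t ∈ s, ∃ e : E ≃L[ℝ] E, (e : E →L[ℝ] E) = H t) :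
    ContinuousOn (fun t => (H t).inverse) s := by
  have : ContinuousOn (fun t => Ring.inverse (H t)) s := by
    intro t ht
    obtain ⟨e, he⟩ := hinv t ht
    have hc : ContinuousAt Ring.inverse (H t) := by
      rw [← he]; exact NormedRing.inverse_continuousAt e.toUnit
    exact hc.comp_continuousWithinAt (hHc t ht)
  simpa [ContinuousLinearMap.ringInverse_eq_inverse] using this

set_option maxHeartbeats 1000000 in
/-- The main Integrated Influence decomposition: along a stationary
path `θ(t)` for the interpolated datasets, the change of test loss decomposes as the
sum over samples of the Integrated Influences
`I(i) = −∫₀¹ G(t) H(t)⁻¹ Jᵢ(t) ρᵢ′(t) dt`. -/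
theorem stmt_4 (M d N : ℕ)
    (L : EuclideanSpace ℝ (Fin M) → ℝ) (hL : ContDiff ℝ 1 L)
    (g : Fin N → EuclideanSpace ℝ (Fin M) × EuclideanSpace ℝ (Fin d) →
      EuclideanSpace ℝ (Fin M))
    (hg : ∀ i, ContDiff ℝ 1 (g i))
    (ρ : Fin N → ℝ → EuclideanSpace ℝ (Fin d))
    (hρ : ∀ i, ContDiffOn ℝ 1 (ρ i) (Set.Icc 0 1))
    (θ : ℝ → EuclideanSpace ℝ (Fin M))
    (hθ : ContDiffOn ℝ 1 θ (Set.Icc 0 1))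
    (hstat : ∀ t ∈ Set.Icc (0:ℝ) 1, ∑ i, g i (θ t, ρ i t) = 0)
    (H : ℝ → EuclideanSpace ℝ (Fin M) →L[ℝ] EuclideanSpace ℝ (Fin M))
    (hH : ∀ t, H t = ∑ i, fderiv ℝ (fun θ' => g i (θ', ρ i t)) (θ t))
    (hinv : ∀ t ∈ Set.Icc (0:ℝ) 1,
      ∃ e : EuclideanSpace ℝ (Fin M) ≃L[ℝ] EuclideanSpace ℝ (Fin M),
        (e : EuclideanSpace ℝ (Fin M) →L[ℝ] EuclideanSpace ℝ (Fin M)) = H t) :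
    L (θ 1) - L (θ 0)
      = -∑ i, ∫ t in (0:ℝ)..1,
          fderiv ℝ L (θ t)
            ((H t).inverse
              (fderiv ℝ (fun y => g i (θ t, y)) (ρ i t)
                (derivWithin (ρ i) (Set.Icc 0 1) t))) := by
  set s : Set ℝ := Set.Icc 0 1 with hs
  have hsu : UniqueDiffOn ℝ s := uniqueDiffOn_Icc one_pos
  set θ' : ℝ → EuclideanSpace ℝ (Fin M) := derivWithin θ s with hθ'
  set ρ' : Fin N → ℝ → EuclideanSpace ℝ (Fin d) := fun i => derivWithin (ρ i) s with hρ'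
  set φ : Fin N → ℝ → ℝ := fun i t =>
    fderiv ℝ L (θ t) ((H t).inverse
      (fderiv ℝ (fun y => g i (θ t, y)) (ρ i t) (ρ' i t))) with hφ
  -- continuity facts
  have hθc : ContinuousOn θ s := hθ.continuousOn
  have hρc : ∀ i, ContinuousOn (ρ i) s := fun i => (hρ i).continuousOn
  have hρ'c : ∀ i, ContinuousOn (ρ' i) s := fun i =>
    (hρ i).continuousOn_derivWithin hsu le_rfl
  have hDL : ContinuousOn (fun t => fderiv ℝ L (θ t)) s :=
    (hL.continuous_fderiv one_ne_zero).comp_continuousOn hθc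
  have hpair : ∀ i, ContinuousOn (fun t => (θ t, ρ i t)) s := fun i =>
    hθc.prodMk (hρc i)
  have hDgc : ∀ i, ContinuousOn (fun t => fderiv ℝ (g i) (θ t, ρ i t)) s := fun i =>
    ((hg i).continuous_fderiv one_ne_zero).comp_continuousOn (hpair i)
  have hHeq : ∀ t, H t
      = ∑ i, (fderiv ℝ (g i) (θ t, ρ i t)).comp
          (ContinuousLinearMap.inl ℝ (EuclideanSpace ℝ (Fin M)) (EuclideanSpace ℝ (Fin d))) := by
    intro t
    rw [hH]
    exact Finset.sum_congr rfl fun i _ => partial_fst' (hg i) (θ t) (ρ i t)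
  have hHc : ContinuousOn H s := by
    have : ContinuousOn (fun t =>
        ∑ i, (fderiv ℝ (g i) (θ t, ρ i t)).comp
          (ContinuousLinearMap.inl ℝ (EuclideanSpace ℝ (Fin M)) (EuclideanSpace ℝ (Fin d)))) s := by
      apply continuousOn_finset_sum
      intro i _
      exact (hDgc i).clm_comp continuousOn_const
    exact this.congr fun t _ => hHeq t
  have hHinvc : ContinuousOn (fun t => (H t).inverse) s := inv_cont hHc hinv
  have hDyc : ∀ i, ContinuousOn (fun t => fderiv ℝ (fun y => g i (θ t, y)) (ρ i t)) s := by
    intro i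
    have : ContinuousOn (fun t =>
        (fderiv ℝ (g i) (θ t, ρ i t)).comp
          (ContinuousLinearMap.inr ℝ (EuclideanSpace ℝ (Fin M)) (EuclideanSpace ℝ (Fin d)))) s :=
      (hDgc i).clm_comp continuousOn_const
    exact this.congr fun t _ => partial_snd' (hg i) (θ t) (ρ i t)
  have hφc : ∀ i, ContinuousOn (φ i) s := fun i =>
    hDL.clm_apply (hHinvc.clm_apply ((hDyc i).clm_apply (hρ'c i)))
  have hφint : ∀ i, IntervalIntegrable (φ i) MeasureTheory.volume 0 1 := by
    intro i
    apply ContinuousOn.intervalIntegrable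
    rw [Set.uIcc_of_le zero_le_one]
    exact hφc i
  -- the derivative identity at interior points
  have key : ∀ t ∈ Set.Ioo (0:ℝ) 1,
      HasDerivAt (fun u => L (θ u)) (-∑ i, φ i t) t := by
    intro t ht
    have hts : t ∈ s := Set.mem_Icc_of_Ioo ht
    have hθd : HasDerivWithinAt θ (θ' t) s t :=
      ((hθ.differentiableOn one_ne_zero) t hts).hasDerivWithinAt
    have hρd : ∀ i, HasDerivWithinAt (ρ i) (ρ' i t) s t := fun i =>
      (((hρ i).differentiableOn one_ne_zero) t hts).hasDerivWithinAt
    -- differentiate the stationarity equation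
    have hSd : HasDerivWithinAt (fun u => ∑ i, g i (θ u, ρ i u))
        (∑ i, fderiv ℝ (g i) (θ t, ρ i t) (θ' t, ρ' i t)) s t := by
      apply HasDerivWithinAt.fun_sum
      intro i _
      exact ((hg i).differentiable one_ne_zero (θ t, ρ i t)).hasFDerivAt.comp_hasDerivWithinAt
        t (hθd.prodMk (hρd i))
    have hS0 : HasDerivWithinAt (fun u => ∑ i, g i (θ u, ρ i u)) 0 s t :=
      (hasDerivWithinAt_const t s (0 : EuclideanSpace ℝ (Fin M))).congr
        (fun y hy => hstat y hy) (hstat t hts)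
    have hzero : ∑ i, fderiv ℝ (g i) (θ t, ρ i t) (θ' t, ρ' i t) = 0 := by
      have h1 := hSd.derivWithin (hsu t hts)
      have h2 := hS0.derivWithin (hsu t hts)
      rw [← h1, h2]
    have hsplit : H t (θ' t)
        + ∑ i, fderiv ℝ (fun y => g i (θ t, y)) (ρ i t) (ρ' i t) = 0 := by
      rw [hHeq t, ContinuousLinearMap.sum_apply, ← Finset.sum_add_distrib, ← hzero]
      apply Finset.sum_congr rfl
      intro i _
      rw [partial_snd' (hg i) (θ t) (ρ i t)]
      exact (clm_apply_split (fderiv ℝ (g i) (θ t, ρ i t)) (θ' t) (ρ' i t)).symm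
    obtain ⟨e, he⟩ := hinv t hts
    have hHinv : (H t).inverse
        = (e.symm : EuclideanSpace ℝ (Fin M) →L[ℝ] EuclideanSpace ℝ (Fin M)) := by
      rw [← he, ContinuousLinearMap.inverse_equiv]
    have h3 : H t (θ' t)
        = -∑ i, fderiv ℝ (fun y => g i (θ t, y)) (ρ i t) (ρ' i t) :=
      eq_neg_of_add_eq_zero_left hsplit
    have hθ'eq : θ' t
        = -(H t).inverse (∑ i, fderiv ℝ (fun y => g i (θ t, y)) (ρ i t) (ρ' i t)) := by
      rw [hHinv]
      calc θ' t
          = (e.symm : EuclideanSpace ℝ (Fin M) →L[ℝ] EuclideanSpace ℝ (Fin M))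
              (H t (θ' t)) := by rw [← he]; simp
        _ = -(e.symm : EuclideanSpace ℝ (Fin M) →L[ℝ] EuclideanSpace ℝ (Fin M))
              (∑ i, fderiv ℝ (fun y => g i (θ t, y)) (ρ i t) (ρ' i t)) := by
            rw [h3, map_neg]
    have hderiv : HasDerivWithinAt (fun u => L (θ u))
        (fderiv ℝ L (θ t) (θ' t)) s t :=
      (hL.differentiable one_ne_zero (θ t)).hasFDerivAt.comp_hasDerivWithinAt t hθd
    have hval : fderiv ℝ L (θ t) (θ' t) = -∑ i, φ i t := by
      rw [hθ'eq, map_neg, map_sum, map_sum]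
    have := hderiv.hasDerivAt (Icc_mem_nhds ht.1 ht.2)
    rwa [hval] at this
  -- fundamental theorem of calculus
  have hcont : ContinuousOn (fun u => L (θ u)) s := hL.continuous.comp_continuousOn hθc
  have hsumint : IntervalIntegrable (fun t => -∑ i, φ i t) MeasureTheory.volume 0 1 := by
    apply ContinuousOn.intervalIntegrable
    rw [Set.uIcc_of_le zero_le_one]
    exact (continuousOn_finset_sum Finset.univ fun i _ => hφc i).neg
  have hFTC : ∫ t in (0:ℝ)..1, (-∑ i, φ i t) = L (θ 1) - L (θ 0) :=
    intervalIntegral.integral_eq_sub_of_hasDeriv_right_of_le zero_le_one hcont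
      (fun t ht => (key t ht).hasDerivWithinAt) hsumint
  rw [← hFTC, intervalIntegral.integral_neg,
    intervalIntegral.integral_finset_sum fun i _ => hφint i]
end

section
/- Let f : ℝ^M → ℝ be continuously differentiable, let θ* ∈ ℝ^M, and define the per-sample MSE gradient g(y) := ∇_θ (f(θ) − y)² |_{θ=θ*} = 2 (f(θ*) − y) ∇f(θ*) for y ∈ ℝ. Then: (i) g is affine in y with constant Jacobian D_y g(y) = −2 ∇f(θ*); (ii) g(f(θ*)) = 0; and (iii) for any row vector G ∈ ℝ^{1×M} and invertible H ∈ ℝ^{M×M}, the one-step (K = 1) discrete Integrated Influence with baseline target ȳ = f(θ*) and linear path ρ(t) = t y + (1−t) f(θ*) equals 2 G H⁻¹ ∇f(θ*) (y − f(θ*)), which is the Influence Function value −G H⁻¹ g(y). -/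
open InnerProductSpace

/-- (Corollary 1.) For the per-sample MSE gradient
`g(y) = ∇_θ (f(θ) − y)² |_{θ = θs} = 2 (f(θs) − y) ∇f(θs)`:
(i) `g` is affine in `y` with constant Jacobian `D_y g = −2 ∇f(θs)`;
(ii) `g(f(θs)) = 0`; and
(iii) the one-step discrete Integrated Influence with baseline target `f(θs)` equals
`2 G H⁻¹ ∇f(θs) (y − f(θs))`, which is the Influence Function value `−G H⁻¹ g(y)`. -/
theorem stmt_8 (M : ℕ)
    (f : EuclideanSpace ℝ (Fin M) → ℝ) (hf : ContDiff ℝ 1 f)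
    (θs : EuclideanSpace ℝ (Fin M))
    (g : ℝ → EuclideanSpace ℝ (Fin M))
    (hgdef : ∀ y, g y = gradient (fun θ => (f θ - y) ^ 2) θs) :
    (∀ y, g y = (2 * (f θs - y)) • gradient f θs)
    ∧ (∀ y, fderiv ℝ g y
        = (1 : ℝ →L[ℝ] ℝ).smulRight ((-2 : ℝ) • gradient f θs))
    ∧ g (f θs) = 0
    ∧ (∀ (G : EuclideanSpace ℝ (Fin M) →L[ℝ] ℝ)
        (H : EuclideanSpace ℝ (Fin M) ≃L[ℝ] EuclideanSpace ℝ (Fin M)) (y : ℝ),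
        -(G (H.symm (fderiv ℝ g (f θs) (y - f θs))))
            = 2 * (y - f θs) * G (H.symm (gradient f θs))
        ∧ -(G (H.symm (fderiv ℝ g (f θs) (y - f θs))))
            = -(G (H.symm (g y)))) := by
  have hdf : DifferentiableAt ℝ f θs := (hf.differentiable one_ne_zero).differentiableAt
  have hgrad : HasGradientAt f (gradient f θs) θs := by
    rw [show gradient f θs = (toDual ℝ _).symm (fderiv ℝ f θs) from rfl]
    exact hdf.hasFDerivAt.hasGradientAt
  have h1 : ∀ y, g y = (2 * (f θs - y)) • gradient f θs := by
    intro y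
    have hsub := hgrad.hasFDerivAt.sub_const y
    have hF : HasFDerivAt (fun θ => (f θ - y) ^ 2)
        ((2 * (f θs - y)) • toDual ℝ _ (gradient f θs)) θs := by
      simp only [pow_two, mul_smul, two_smul]
      exact hsub.mul hsub
    have hG : HasGradientAt (fun θ => (f θ - y) ^ 2)
        ((2 * (f θs - y)) • gradient f θs) θs := by
      rw [hasGradientAt_iff_hasFDerivAt, map_smul]
      simpa using hF
    rw [hgdef y, hG.gradient]
  have h2 : ∀ y, fderiv ℝ g y
      = (1 : ℝ →L[ℝ] ℝ).smulRight ((-2 : ℝ) • gradient f θs) := by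
    intro y
    have hD : HasDerivAt g ((-2 : ℝ) • gradient f θs) y := by
      have hc : HasDerivAt (fun y : ℝ => 2 * (f θs - y)) (-2) y := by
        simpa using (((hasDerivAt_id y).const_sub (f θs)).const_mul 2)
      have := hc.smul_const (gradient f θs)
      refine HasDerivAt.congr_of_eventuallyEq this ?_
      filter_upwards with z using h1 z
    exact hD.hasFDerivAt.fderiv
  refine ⟨h1, h2, by simp [h1], ?_⟩
  intro G H y
  have hval : fderiv ℝ g (f θs) (y - f θs) = (-2 * (y - f θs)) • gradient f θs := by
    rw [h2]
    simp [ContinuousLinearMap.smulRight_apply, smul_smul, mul_comm]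
  constructor
  · rw [hval, map_smul, map_smul]
    simp only [smul_eq_mul]
    ring
  · rw [hval, h1 y, show (-2 * (y - f θs)) = 2 * (f θs - y) by ring]
end
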